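/- Let $R$ be a commutative noetherian ring. A full subcategory of the category of finitely generated $R$-modules closed under isomorphisms is a torsion class (closed under quotients and extensions) if and only if it is a Serre subcategory (closed under submodules, quotients, and extensions). -/

import Mathlib

universe u

variable {R : Type u} [CommRing R]

/-- A predicate on (finitely generated) `R`-modules, i.e. a subcategory of `mod R` closed
under isomorphisms. -/
abbrev ModClass (R : Type u) [CommRing R] : Type (u + 1) :=
  ∀ (M : Type u) [AddCommGroup M] [Module R M], Prop

/-- The class `P` is closed under isomorphisms (among finitely generated modules). -/
def IsoClosed (P : ModClass R) : Prop :=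
  ∀ (M N : Type u) [AddCommGroup M] [Module R M] [AddCommGroup N] [Module R N],
    Module.Finite R M → (M ≃ₗ[R] N) → P M → P N

/-- The class `P` is closed under quotients (among finitely generated modules). -/
def QuotClosed (P : ModClass R) : Prop :=
  ∀ (M N : Type u) [AddCommGroup M] [Module R M] [AddCommGroup N] [Module R N],
    Module.Finite R M → Module.Finite R N →
    ∀ f : M →ₗ[R] N, Function.Surjective f → P M → P N

/-- The class `P` is closed under submodules (among finitely generated modules). -/
def SubClosed (P : ModClass R) : Prop :=
  ∀ (M : Type u) [AddCommGroup M] [Module R M],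
    Module.Finite R M → P M → ∀ N : Submodule R M, P N

/-- The class `P` is closed under extensions (among finitely generated modules): if
`0 → A → B → C → 0` is exact with `A, C ∈ P` then `B ∈ P`. -/
def ExtClosed (P : ModClass R) : Prop :=
  ∀ (A B C : Type u) [AddCommGroup A] [Module R A] [AddCommGroup B] [Module R B]
    [AddCommGroup C] [Module R C],
    Module.Finite R A → Module.Finite R B → Module.Finite R C →
    ∀ (f : A →ₗ[R] B) (g : B →ₗ[R] C), Function.Injective f → Function.Surjective g →
      LinearMap.range f = LinearMap.ker g → P A → P C → P B

/-- Let `R` be a commutative noetherian ring.  A full subcategory of the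
category of finitely generated `R`-modules closed under isomorphisms is a torsion class
(closed under quotients and extensions) if and only if it is a Serre subcategory (closed
under submodules, quotients and extensions). -/
lemma devissage [IsNoetherianRing R] {P : ModClass R} (hiso : IsoClosed P)
    (hE : ExtClosed P)
    (h0 : ∀ (Z : Type u) [AddCommGroup Z] [Module R Z], Subsingleton Z → P Z)
    (M : Type u) [AddCommGroup M] [Module R M] [Module.Finite R M]
    (hp : ∀ q : Ideal R, q.IsPrime → Module.annihilator R M ≤ q → P (R ⧸ q)) : P M := by
  obtain ⟨N, hN, hmax⟩ := set_has_maximal_iff_noetherian.mpr inferInstance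
      {N : Submodule R M | P N} ⟨⊥, h0 _ inferInstance⟩
  rcases eq_or_ne N ⊤ with rfl | hne
  · exact hiso _ M inferInstance Submodule.topEquiv hN
  · exfalso
    haveI := Submodule.Quotient.nontrivial_iff.mpr (lt_top_iff_ne_top.mpr hne).ne
    obtain ⟨q, hq⟩ := associatedPrimes.nonempty R (M ⧸ N)
    obtain ⟨hqprime, x, hxq⟩ := isAssociatedPrime_iff.mp hq
    rw [Submodule.bot_colon'] at hxq
    have hx0 : x ≠ 0 := by
      rintro rfl
      rw [Submodule.span_zero_singleton, Submodule.annihilator_bot] at hxq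
      exact hqprime.ne_top hxq
    set τ := LinearMap.toSpanSingleton R (M ⧸ N) x with hτ
    have hker : LinearMap.ker τ = q := by
      ext r
      rw [LinearMap.mem_ker, hxq, Submodule.mem_annihilator_span_singleton]
      exact Iff.rfl
    let e : (R ⧸ q) ≃ₗ[R] ↥(LinearMap.range τ) :=
      (Submodule.quotEquivOfEq q (LinearMap.ker τ) hker.symm).trans τ.quotKerEquivRange
    set N'' : Submodule R M := (LinearMap.range τ).comap N.mkQ with hN''
    have hle : N ≤ N'' := by
      intro y hy
      simp only [hN'', Submodule.mem_comap]
      rw [show N.mkQ y = 0 from (Submodule.Quotient.mk_eq_zero N).mpr hy]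
      exact zero_mem _
    have hlt : N < N'' := by
      refine lt_of_le_of_ne hle fun heq => ?_
      obtain ⟨m, hm⟩ := Submodule.Quotient.mk_surjective N x
      have hmN'' : m ∈ N'' := by
        simp only [hN'', Submodule.mem_comap]
        exact ⟨1, by simpa [τ] using hm.symm⟩
      rw [← heq] at hmN''
      exact hx0 (by rw [← hm]; exact (Submodule.Quotient.mk_eq_zero N).mpr hmN'')
    let g : ↥N'' →ₗ[R] R ⧸ q :=
      e.symm.toLinearMap ∘ₗ LinearMap.codRestrict (LinearMap.range τ)
        (N.mkQ ∘ₗ N''.subtype) (fun c => c.2)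
    have hgsurj : Function.Surjective g := by
      refine e.symm.surjective.comp fun z => ?_
      obtain ⟨m, hm⟩ := Submodule.Quotient.mk_surjective N z.1
      have hmN'' : m ∈ N'' := by
        simp only [hN'', Submodule.mem_comap]
        rw [show N.mkQ m = z.1 from hm]; exact z.2
      exact ⟨⟨m, hmN''⟩, Subtype.ext hm⟩
    let f : ↥N →ₗ[R] ↥N'' := Submodule.inclusion hle
    have hfinj : Function.Injective f := Submodule.inclusion_injective hle
    have hrange : LinearMap.range f = LinearMap.ker g := by
      rw [Submodule.range_inclusion]
      ext ⟨y, hy⟩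
      simp only [Submodule.mem_comap, Submodule.coe_subtype, LinearMap.mem_ker, g,
        LinearMap.coe_comp, Function.comp_apply, LinearEquiv.coe_coe,
        EmbeddingLike.map_eq_zero_iff]
      rw [Subtype.ext_iff]
      change y ∈ N ↔ N.mkQ y = 0
      simp [Submodule.Quotient.mk_eq_zero]
    have hannle : Module.annihilator R M ≤ q := by
      intro r hr
      rw [hxq, Submodule.mem_annihilator_span_singleton]
      exact Module.mem_annihilator.mp
        (LinearMap.annihilator_le_of_surjective N.mkQ (Submodule.Quotient.mk_surjective N) hr) x
    exact hmax N'' (hE ↥N ↥N'' (R ⧸ q) inferInstance inferInstance inferInstance f g hfinj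
      hgsurj hrange hN (hp q hqprime hannle)) hlt

/-- Determinant-trick (Nakayama): if `ann M ≤ p` then `ann (M ⧸ pM) ≤ p`. -/
lemma ann_quot_smul_le {M : Type u} [AddCommGroup M] [Module R M] [Module.Finite R M]
    {p : Ideal R} (hp : p.IsPrime) (hann : Module.annihilator R M ≤ p) {r : R}
    (hr : r ∈ Module.annihilator R (M ⧸ (p • ⊤ : Submodule R M))) : r ∈ p := by
  have hrange : LinearMap.range (r • (LinearMap.id : M →ₗ[R] M)) ≤ p • ⊤ := by
    rintro x ⟨m, rfl⟩
    have := Module.mem_annihilator.mp hr (Submodule.Quotient.mk m)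
    rw [← Submodule.Quotient.mk_smul, Submodule.Quotient.mk_eq_zero] at this
    simpa using this
  obtain ⟨q, hmonic, -, hcoeff, haeval⟩ :=
    LinearMap.exists_monic_and_coeff_mem_pow_and_aeval_eq_zero_of_range_le_smul R
      (r • (LinearMap.id : M →ₗ[R] M)) p hrange
  have hsmul : (r • (LinearMap.id : M →ₗ[R] M)) = algebraMap R (Module.End R M) r := by
    rw [Module.algebraMap_end_eq_smul_id]
  rw [hsmul, Polynomial.aeval_algebraMap_apply_eq_algebraMap_eval] at haeval
  have heval : q.eval r ∈ Module.annihilator R M := by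
    rw [Module.mem_annihilator]
    intro m
    have : (algebraMap R (Module.End R M) (q.eval r)) m = 0 := by rw [haeval]; rfl
    rwa [Module.algebraMap_end_eq_smul_id, LinearMap.smul_apply, LinearMap.id_apply] at this
  have hsum : q.eval r = (∑ i ∈ Finset.range q.natDegree, q.coeff i * r ^ i) + r ^ q.natDegree := by
    rw [Polynomial.eval_eq_sum_range, Finset.sum_range_succ, hmonic.coeff_natDegree, one_mul]
  have hmem : (∑ i ∈ Finset.range q.natDegree, q.coeff i * r ^ i) ∈ p := by
    refine Ideal.sum_mem _ fun i hi => Ideal.mul_mem_right _ _ ?_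
    have hi' : q.natDegree - i ≠ 0 := by
      have := Finset.mem_range.mp hi; omega
    exact Ideal.pow_le_self hi' (hcoeff i)
  have hpow : r ^ q.natDegree ∈ p := by
    have h2 := hann heval
    rw [hsum] at h2
    simpa using (Ideal.sub_mem _ h2 hmem)
  exact hp.mem_of_pow_mem _ hpow


lemma prime_quot_mem [IsNoetherianRing R] {P : ModClass R} (hiso : IsoClosed P)
    (hQ : QuotClosed P) (hE : ExtClosed P)
    (h0 : ∀ (Z : Type u) [AddCommGroup Z] [Module R Z], Subsingleton Z → P Z) :
    ∀ p : Ideal R, p.IsPrime → ∀ (M : Type u) [AddCommGroup M] [Module R M],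
      Module.Finite R M → P M → Module.annihilator R M ≤ p → P (R ⧸ p) := by
  have wf : WellFounded ((· > ·) : Ideal R → Ideal R → Prop) :=
    (isNoetherian_iff (R := R) (M := R)).mp inferInstance
  intro p
  induction p using wf.induction with
  | _ p IH =>
  intro hp M _ _ hfin hPM hann
  have hone : (1 : R) ∉ p := fun h => hp.ne_top ((Ideal.eq_top_iff_one p).mpr h)
  -- Step a: pass to M₁ = M / pM
  set M₁ := M ⧸ (p • ⊤ : Submodule R M) with hM₁
  have hPM₁ : P M₁ := hQ M M₁ inferInstance inferInstance (Submodule.mkQ _)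
    (Submodule.mkQ_surjective _) hPM
  have hannM₁ : Module.annihilator R M₁ ≤ p := fun r hr => ann_quot_smul_le hp hann hr
  have hpleM₁ : p ≤ Module.annihilator R M₁ := by
    intro r hr
    rw [Module.mem_annihilator]
    intro m
    obtain ⟨m, rfl⟩ := Submodule.mkQ_surjective _ m
    show r • Submodule.Quotient.mk m = 0
    rw [← Submodule.Quotient.mk_smul, Submodule.Quotient.mk_eq_zero]
    exact Submodule.smul_mem_smul hr trivial
  -- Step b: choose G maximal with ann (M₁ ⧸ G) ≤ p
  obtain ⟨G, hG, hGmax⟩ := set_has_maximal_iff_noetherian.mpr inferInstance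
      {G : Submodule R M₁ | Module.annihilator R (M₁ ⧸ G) ≤ p}
      ⟨⊥, by
        show Module.annihilator R (M₁ ⧸ (⊥ : Submodule R M₁)) ≤ p
        rw [(Submodule.quotEquivOfEqBot (⊥ : Submodule R M₁) rfl).annihilator_eq]
        exact hannM₁⟩
  -- Step c: C := M₁ ⧸ G
  set C := M₁ ⧸ G with hC
  have hPC : P C := hQ M₁ C inferInstance inferInstance G.mkQ (Submodule.mkQ_surjective _) hPM₁
  have hannC : Module.annihilator R C ≤ p := hG
  have hpleC : p ≤ Module.annihilator R C :=
    le_trans hpleM₁ (LinearMap.annihilator_le_of_surjective G.mkQ (Submodule.mkQ_surjective _))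
  have hCnontriv : Nontrivial C := by
    by_contra h
    rw [not_nontrivial_iff_subsingleton] at h
    exact hone (hannC (Module.mem_annihilator.mpr fun m => Subsingleton.elim _ _))
  -- Step d: maximality consequence
  have hmaxq : ∀ C' : Submodule R C, C' ≠ ⊥ → ¬ Module.annihilator R (C ⧸ C') ≤ p := by
    intro C' hC' hle
    set G' := C'.comap G.mkQ with hG'
    have hGle : G ≤ G' := by
      intro y hy
      simp only [hG', Submodule.mem_comap]
      rw [show G.mkQ y = 0 from (Submodule.Quotient.mk_eq_zero G).mpr hy]
      exact zero_mem _
    have hGlt : G < G' := by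
      refine lt_of_le_of_ne hGle fun heq => hC' ?_
      rw [eq_bot_iff]
      intro c hc
      obtain ⟨m, rfl⟩ := Submodule.mkQ_surjective G c
      have hmG' : m ∈ G' := by
        simp only [hG', Submodule.mem_comap]
        exact hc
      rw [← heq] at hmG'
      rw [Submodule.mem_bot, Submodule.mkQ_apply, Submodule.Quotient.mk_eq_zero]
      exact hmG'
    have hmap : G'.map G.mkQ = C' :=
      Submodule.map_comap_eq_of_surjective (Submodule.mkQ_surjective G) C'
    have e3 : (C ⧸ C') ≃ₗ[R] M₁ ⧸ G' :=
      (Submodule.quotEquivOfEq C' (G'.map G.mkQ) hmap.symm).trans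
        (Submodule.quotientQuotientEquivQuotient G G' hGle)
    refine hGmax G' ?_ hGlt
    show Module.annihilator R (M₁ ⧸ G') ≤ p
    rw [← e3.annihilator_eq]
    exact hle
  -- Step e: C is torsion-free w.r.t. the complement of p
  let t : Submodule R C :=
    { carrier := {c | ∃ s, s ∉ p ∧ s • c = 0}
      add_mem' := by
        rintro a b ⟨s, hs, hsa⟩ ⟨u, hu, hub⟩
        refine ⟨s * u, fun h => ((hp.mem_or_mem h).elim hs hu), ?_⟩
        have h1 : (s * u) • a = 0 := by rw [mul_comm, mul_smul, hsa, smul_zero]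
        have h2 : (s * u) • b = 0 := by rw [mul_smul, hub, smul_zero]
        rw [smul_add, h1, h2, add_zero]
      zero_mem' := ⟨1, hone, smul_zero 1⟩
      smul_mem' := by
        rintro r a ⟨s, hs, hsa⟩
        exact ⟨s, hs, by rw [smul_comm, hsa, smul_zero]⟩ }
  have ht : t = ⊥ := by
    by_contra h
    refine hmaxq t h ?_
    intro s hsann
    by_contra hsp
    obtain ⟨S, hS⟩ := Module.finite_def.mp (inferInstance : Module.Finite R C)
    have hst : ∀ x : C, ∃ w, w ∉ p ∧ w • s • x = 0 := by
      intro x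
      have : s • (Submodule.Quotient.mk x : C ⧸ t) = 0 :=
        Module.mem_annihilator.mp hsann _
      rw [← Submodule.Quotient.mk_smul, Submodule.Quotient.mk_eq_zero] at this
      exact this
    choose w hw1 hw2 using hst
    set u := ∏ x ∈ S, w x with hu
    have hup : u ∉ p := by
      intro hmem
      rw [hu] at hmem
      obtain ⟨x, _, hx⟩ := Ideal.IsPrime.prod_mem_iff.mp hmem
      exact hw1 x hx
    have hkill : ∀ m : C, (u * s) • m = 0 := by
      have hsub : (S : Set C) ⊆
          (LinearMap.ker ((u * s) • (LinearMap.id : C →ₗ[R] C)) : Set C) := by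
        intro x hx
        obtain ⟨k, hk⟩ := Finset.dvd_prod_of_mem w hx
        simp only [SetLike.mem_coe, LinearMap.mem_ker, LinearMap.smul_apply, LinearMap.id_apply]
        rw [hu, hk, mul_comm (w x) k, mul_assoc, mul_smul, mul_smul, hw2 x, smul_zero]
      intro m
      have hm : m ∈ Submodule.span R (S : Set C) := by rw [hS]; trivial
      have := Submodule.span_le.mpr hsub hm
      simpa using this
    have : u * s ∈ p := hannC (Module.mem_annihilator.mpr hkill)
    exact (hp.mem_or_mem this).elim hup hsp
  -- Step f: find a nonzero cyclic submodule almost containing C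
  obtain ⟨x₀, hx₀⟩ := exists_ne (0 : C)
  have hspan : (R ∙ x₀) ≠ ⊥ := by simpa [Submodule.span_singleton_eq_bot] using hx₀
  obtain ⟨s, hsann, hsp⟩ := SetLike.not_le_iff_exists.mp (hmaxq _ hspan)
  have hsC : ∀ c : C, s • c ∈ (R ∙ x₀) := by
    intro c
    have : s • (Submodule.Quotient.mk c : C ⧸ (R ∙ x₀)) = 0 :=
      Module.mem_annihilator.mp hsann _
    rwa [← Submodule.Quotient.mk_smul, Submodule.Quotient.mk_eq_zero] at this
  -- Step g: the annihilator of x₀ is p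
  set τ := LinearMap.toSpanSingleton R C x₀ with hτ
  have hker : LinearMap.ker τ = p := by
    ext r
    rw [LinearMap.mem_ker]
    constructor
    · intro hr
      by_contra hrp
      have : x₀ ∈ t := ⟨r, hrp, hr⟩
      rw [ht] at this
      exact hx₀ this
    · intro hr
      exact Module.mem_annihilator.mp (hpleC hr) x₀
  let e₂ : (R ⧸ p) ≃ₗ[R] ↥(LinearMap.range τ) :=
    (Submodule.quotEquivOfEq p (LinearMap.ker τ) hker.symm).trans τ.quotKerEquivRange
  -- Step i: embed C into R ⧸ p
  have hcod : ∀ c : C, (s • (LinearMap.id : C →ₗ[R] C)) c ∈ LinearMap.range τ := by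
    intro c
    have h1 := hsC c
    rw [LinearMap.span_singleton_eq_range] at h1
    simpa [hτ] using h1
  let χ : C →ₗ[R] R ⧸ p :=
    e₂.symm.toLinearMap ∘ₗ LinearMap.codRestrict (LinearMap.range τ)
      (s • (LinearMap.id : C →ₗ[R] C)) hcod
  have hχinj : Function.Injective χ := by
    refine e₂.symm.injective.comp ?_
    intro a b hab
    have hval : s • a = s • b := congrArg Subtype.val hab
    have : s • (a - b) = 0 := by rw [smul_sub, hval, sub_self]
    have : a - b ∈ t := ⟨s, hsp, this⟩
    rw [ht] at this
    exact sub_eq_zero.mp this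
  set I' := LinearMap.range χ with hI'
  have eC : C ≃ₗ[R] ↥I' := LinearEquiv.ofInjective χ hχinj
  have hPI' : P ↥I' := hiso C ↥I' inferInstance eC hPC
  -- Step k: pull back to an ideal strictly containing p
  set I : Ideal R := I'.comap p.mkQ with hIdef
  have hpI : p ≤ I := by
    intro y hy
    simp only [hIdef, Submodule.mem_comap]
    rw [show p.mkQ y = 0 from (Submodule.Quotient.mk_eq_zero p).mpr hy]
    exact zero_mem _
  have hpneI : p ≠ I := by
    intro heq
    have hmem : χ x₀ ∈ I' := LinearMap.mem_range_self χ x₀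
    obtain ⟨r₀, hr₀⟩ := Submodule.mkQ_surjective p (χ x₀)
    have : r₀ ∈ I := by
      simp only [hIdef, Submodule.mem_comap]
      rw [hr₀]; exact hmem
    rw [← heq] at this
    have : χ x₀ = 0 := by rw [← hr₀]; exact (Submodule.Quotient.mk_eq_zero p).mpr this
    exact hx₀ (hχinj (by rw [this, map_zero]))
  -- Step l: P (R ⧸ I) by devissage and the inductive hypothesis
  have hPRI : P (R ⧸ I) := by
    refine devissage hiso hE h0 (R ⧸ I) ?_
    intro q hq hannq
    rw [Ideal.annihilator_quotient] at hannq
    have hpq : p ≤ q := le_trans hpI hannq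
    have hqgt : q > p := by
      refine lt_of_le_of_ne hpq fun heq => ?_
      exact hpneI (le_antisymm hpI (by rw [← heq] at hannq; exact hannq))
    exact IH q hqgt hq M hfin hPM (le_trans hann hpq)
  -- Step m: transport along the third isomorphism theorem and close with the extension
  have hmap2 : Submodule.map p.mkQ (I : Submodule R R) = I' :=
    Submodule.map_comap_eq_of_surjective (Submodule.mkQ_surjective p) I'
  have e₄ : (R ⧸ I) ≃ₗ[R] ((R ⧸ p) ⧸ I') :=
    (Submodule.quotientQuotientEquivQuotient p I hpI).symm.trans
      (Submodule.quotEquivOfEq _ _ hmap2)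
  have hPq : P ((R ⧸ p) ⧸ I') := hiso (R ⧸ I) _ inferInstance e₄ hPRI
  exact hE ↥I' (R ⧸ p) ((R ⧸ p) ⧸ I') inferInstance inferInstance inferInstance
    I'.subtype I'.mkQ (Submodule.injective_subtype I') (Submodule.mkQ_surjective I')
    (by rw [Submodule.range_subtype, Submodule.ker_mkQ]) hPI' hPq


theorem statement5 {R : Type u} [CommRing R] [IsNoetherianRing R]
    (P : ModClass R) (hiso : IsoClosed P) :
    (QuotClosed P ∧ ExtClosed P) ↔ (SubClosed P ∧ QuotClosed P ∧ ExtClosed P) := by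
  constructor
  · rintro ⟨hQ, hE⟩
    refine ⟨?_, hQ, hE⟩
    intro M _ _ hfin hPM N
    haveI := hfin
    have h0 : ∀ (Z : Type u) [AddCommGroup Z] [Module R Z], Subsingleton Z → P Z := by
      intro Z _ _ hZ
      haveI := hZ
      have hsurj : Function.Surjective (0 : M →ₗ[R] Z) := fun z => ⟨0, Subsingleton.elim _ _⟩
      haveI : Module.Finite R Z := Module.Finite.of_surjective (0 : M →ₗ[R] Z) hsurj
      exact hQ M Z hfin inferInstance 0 hsurj hPM
    refine devissage hiso hE h0 ↥N ?_
    intro q hq hannq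
    refine prime_quot_mem hiso hQ hE h0 q hq M hfin hPM (le_trans ?_ hannq)
    exact N.subtype.annihilator_le_of_injective (Submodule.injective_subtype N)
  · rintro ⟨_, hQ, hE⟩; exact ⟨hQ, hE⟩
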